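/- Let G_1, …, G_t be graphs on a common vertex set, G_∩ their intersection, C a clique in G_∩, and C' ⊆ C a vertex-maximal usually-avg-c-isolated set (no proper superset C'' with C' ⊂ C'' ⊆ C satisfies Σ_{i=1}^t Σ_{v∈C''} outdeg_{G_i}(v, C'') < c·|C''|·t, while C' itself satisfies this). Then C' contains every vertex v ∈ C with Σ_{i=1}^t deg_{G_i}(v) ≤ t·(δ_{G_∩}(C) + |C'| + 1). -/

import Mathlib

open Finset
open scoped Classical

variable {V : Type*} [Fintype V] [DecidableEq V]

/-- Number of neighbors of `v` in `G` lying outside `A`. -/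
noncomputable def outdeg (G : SimpleGraph V) (v : V) (A : Finset V) : ℕ :=
  (Finset.univ.filter fun u => G.Adj v u ∧ u ∉ A).card

/-- Degree of `v` in `G`. -/
noncomputable def deg (G : SimpleGraph V) (v : V) : ℕ :=
  (Finset.univ.filter fun u => G.Adj v u).card

/-- Minimum degree over the vertices of a nonempty set `C`. -/
noncomputable def minDeg (G : SimpleGraph V) (C : Finset V) (hC : C.Nonempty) : ℕ :=
  C.inf' hC fun v => deg G v

/-- Edge-wise intersection of the layers `G a, …, G b`. -/
def interGraph (G : ℕ → SimpleGraph V) (a b : ℕ) : SimpleGraph V where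
  Adj u v := u ≠ v ∧ ∀ i ∈ Finset.Icc a b, (G i).Adj u v
  symm := ⟨fun u v h => ⟨h.1.symm, fun i hi => (h.2 i hi).symm⟩⟩
  loopless := ⟨fun v h => h.1 rfl⟩

/-- Edge-wise union of the layers `G a, …, G b`. -/
def unionGraph (G : ℕ → SimpleGraph V) (a b : ℕ) : SimpleGraph V where
  Adj u v := ∃ i ∈ Finset.Icc a b, (G i).Adj u v
  symm := ⟨fun u v h => ⟨h.choose, h.choose_spec.1, h.choose_spec.2.symm⟩⟩
  loopless := ⟨fun v h => (G h.choose).irrefl h.choose_spec.2⟩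
/-- `S` is usually-avg-`c`-isolated over the layers `G 1, …, G t`. -/
def UsuallyAvgIsolated (G : ℕ → SimpleGraph V) (t : ℕ) (c : ℚ) (S : Finset V) : Prop :=
  (∑ i ∈ Finset.Icc 1 t, ∑ v ∈ S, (outdeg (G i) v S : ℚ)) < c * S.card * t

theorem stmt2 (G : ℕ → SimpleGraph V) (t : ℕ) (ht : 1 ≤ t) (c : ℚ) (hc : 0 < c)
    (C C' : Finset V) (hC : C.Nonempty)
    (hclique : (interGraph G 1 t).IsClique (C : Set V)) (hsub : C' ⊆ C)
    (hiso : UsuallyAvgIsolated G t c C')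
    (hmax : ∀ C'' : Finset V, C' ⊂ C'' → C'' ⊆ C → ¬ UsuallyAvgIsolated G t c C'') :
    ∀ v ∈ C,
      (∑ i ∈ Finset.Icc 1 t, (deg (G i) v : ℚ)) ≤
        (t : ℚ) * ((minDeg (interGraph G 1 t) C hC : ℚ) + C'.card + 1) →
      v ∈ C' := by
  classical
  intro v hv hdeg
  by_contra hv'
  -- basic facts
  have ht0 : (0:ℚ) < t := by exact_mod_cast Nat.lt_of_lt_of_le Nat.zero_lt_one ht
  have hadj : ∀ i ∈ Finset.Icc 1 t, ∀ a ∈ C, ∀ b ∈ C, a ≠ b → (G i).Adj a b := by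
    intro i hi a ha b hb hab
    exact (hclique ha hb hab : a ≠ b ∧ ∀ j ∈ Finset.Icc 1 t, (G j).Adj a b).2 i hi
  -- C' is nonempty
  have hcard : 0 < C'.card := by
    by_contra h
    have h0 : C'.card = 0 := by omega
    have := hiso
    unfold UsuallyAvgIsolated at this
    rw [h0] at this
    have hnn : (0:ℚ) ≤ ∑ i ∈ Finset.Icc 1 t, ∑ v ∈ C', (outdeg (G i) v C' : ℚ) := by
      positivity
    push_cast at this
    nlinarith
  -- split of degree
  have hsplit : ∀ (H : SimpleGraph V) (u : V) (A : Finset V),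
      deg H u = outdeg H u A + (Finset.univ.filter fun w => H.Adj u w ∧ w ∈ A).card := by
    intro H u A
    unfold deg outdeg
    have h := Finset.card_filter_add_card_filter_not
      (s := Finset.univ.filter fun w => H.Adj u w) (p := fun w => w ∈ A)
    simp only [Finset.filter_filter] at h
    omega
  set δ := minDeg (interGraph G 1 t) C hC with hδdef
  set C'' : Finset V := insert v C' with hC''def
  have hvC'' : v ∈ C'' := Finset.mem_insert_self v C'
  -- Fact C : minDeg + 1 ≤ outdeg + card
  have factC : ∀ i ∈ Finset.Icc 1 t, ∀ u ∈ C', δ + 1 ≤ outdeg (G i) u C' + C'.card := by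
    intro i hi u hu
    have h1 : δ ≤ deg (interGraph G 1 t) u := Finset.inf'_le _ (hsub hu)
    have h2 : deg (interGraph G 1 t) u ≤ deg (G i) u := by
      apply Finset.card_le_card
      intro w hw
      simp only [Finset.mem_filter, Finset.mem_univ, true_and] at hw ⊢
      exact (hw : u ≠ w ∧ ∀ j ∈ Finset.Icc 1 t, (G j).Adj u w).2 i hi
    have h3 : (Finset.univ.filter fun w => (G i).Adj u w ∧ w ∈ C').card + 1 ≤ C'.card := by
      have hsub' : (Finset.univ.filter fun w => (G i).Adj u w ∧ w ∈ C') ⊆ C'.erase u := by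
        intro w hw
        simp only [Finset.mem_filter, Finset.mem_univ, true_and] at hw
        refine Finset.mem_erase.mpr ⟨?_, hw.2⟩
        intro h
        exact (G i).loopless.irrefl u (h ▸ hw.1)
      have := Finset.card_le_card hsub'
      rw [Finset.card_erase_of_mem hu] at this
      omega
    have h4 := hsplit (G i) u C'
    omega
  -- Fact A : outdeg u C' = outdeg u C'' + 1 for u ∈ C'
  have factA : ∀ i ∈ Finset.Icc 1 t, ∀ u ∈ C',
      outdeg (G i) u C' = outdeg (G i) u C'' + 1 := by
    intro i hi u hu
    have huv : u ≠ v := fun h => hv' (h ▸ hu)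
    have hadjuv : (G i).Adj u v := hadj i hi u (hsub hu) v hv huv
    unfold outdeg
    have hset : (Finset.univ.filter fun w => (G i).Adj u w ∧ w ∉ C')
        = insert v (Finset.univ.filter fun w => (G i).Adj u w ∧ w ∉ C'') := by
      ext w
      simp only [Finset.mem_filter, Finset.mem_univ, true_and, Finset.mem_insert,
        hC''def, not_or]
      constructor
      · rintro ⟨haw, hw⟩
        by_cases hwv : w = v
        · exact Or.inl hwv
        · exact Or.inr ⟨haw, hwv, hw⟩
      · rintro (rfl | ⟨haw, _, hw⟩)
        · exact ⟨hadjuv, hv'⟩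
        · exact ⟨haw, hw⟩
    rw [hset, Finset.card_insert_of_notMem]
    simp [hvC'']
  -- Fact B : outdeg v C'' + card C' = deg v
  have factB : ∀ i ∈ Finset.Icc 1 t,
      outdeg (G i) v C'' + C'.card = deg (G i) v := by
    intro i hi
    have hset : (Finset.univ.filter fun w => (G i).Adj v w ∧ w ∈ C'') = C' := by
      ext w
      simp only [Finset.mem_filter, Finset.mem_univ, true_and, hC''def, Finset.mem_insert]
      constructor
      · rintro ⟨haw, (rfl | hw)⟩
        · exact absurd haw ((G i).loopless.irrefl w)
        · exact hw
      · intro hw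
        have hwv : w ≠ v := fun h => hv' (h ▸ hw)
        exact ⟨(hadj i hi v hv w (hsub hw) hwv.symm).symm.symm, Or.inr hw⟩
    have := hsplit (G i) v C''
    rw [hset] at this
    omega
  -- sums
  set S : ℚ := ∑ i ∈ Finset.Icc 1 t, ∑ u ∈ C', (outdeg (G i) u C' : ℚ) with hSdef
  have hSlt : S < c * C'.card * t := hiso
  -- lower bound on S from factC
  have hSlow : (t:ℚ) * (C'.card * (δ + 1)) ≤ S + (t:ℚ) * (C'.card * C'.card) := by
    have hstep : ∀ i ∈ Finset.Icc 1 t,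
        (C'.card : ℚ) * (δ + 1) ≤ (∑ u ∈ C', (outdeg (G i) u C' : ℚ)) + C'.card * C'.card := by
      intro i hi
      have : ∑ u ∈ C', ((δ : ℚ) + 1) ≤ ∑ u ∈ C', ((outdeg (G i) u C' : ℚ) + C'.card) := by
        apply Finset.sum_le_sum
        intro u hu
        have := factC i hi u hu
        push_cast
        exact_mod_cast this
      simp only [Finset.sum_const, Finset.sum_add_distrib, nsmul_eq_mul] at this
      linarith [this]
    have := Finset.sum_le_sum hstep
    simp only [Finset.sum_const, Finset.sum_add_distrib, nsmul_eq_mul, Nat.card_Icc] at this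
    have hcardIcc : ((t + 1 - 1 : ℕ) : ℚ) = (t : ℚ) := by push_cast [Nat.add_sub_cancel]; ring
    rw [hcardIcc] at this
    exact this
  -- δ + 1 < c + card C'
  have hcard0 : (0:ℚ) < C'.card := by exact_mod_cast hcard
  have qineq : (δ:ℚ) + 1 < c + C'.card := by
    have hA : (0:ℚ) < (t:ℚ) * C'.card := by positivity
    have key : (t:ℚ) * C'.card * ((δ:ℚ) + 1) < (t:ℚ) * C'.card * (c + C'.card) := by
      nlinarith [hSlow, hSlt]
    exact lt_of_mul_lt_mul_left key (le_of_lt hA)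
  -- total degree of v
  set D : ℚ := ∑ i ∈ Finset.Icc 1 t, (deg (G i) v : ℚ) with hDdef
  -- compute S'
  have hS' : (∑ i ∈ Finset.Icc 1 t, ∑ u ∈ C'', (outdeg (G i) u C'' : ℚ))
      + 2 * (t:ℚ) * C'.card = D + S := by
    have hstep : ∀ i ∈ Finset.Icc 1 t,
        (∑ u ∈ C'', (outdeg (G i) u C'' : ℚ)) + 2 * C'.card
          = (deg (G i) v : ℚ) + ∑ u ∈ C', (outdeg (G i) u C' : ℚ) := by
      intro i hi
      rw [hC''def, Finset.sum_insert hv']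
      have hB := factB i hi
      have hsum : ∑ u ∈ C', (outdeg (G i) u C'' : ℚ)
          = (∑ u ∈ C', (outdeg (G i) u C' : ℚ)) - C'.card := by
        have : ∀ u ∈ C', (outdeg (G i) u C'' : ℚ) = (outdeg (G i) u C' : ℚ) - 1 := by
          intro u hu
          have := factA i hi u hu
          push_cast [this]
          ring
        rw [Finset.sum_congr rfl this, Finset.sum_sub_distrib, Finset.sum_const, nsmul_eq_mul]
        ring
      rw [hsum]
      have hB' : (outdeg (G i) v C'' : ℚ) = (deg (G i) v : ℚ) - C'.card := by
        have := factB i hi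
        push_cast [← this]
        ring
      rw [hB']
      ring
    have := Finset.sum_congr rfl hstep
    rw [Finset.sum_add_distrib, Finset.sum_add_distrib, Finset.sum_const, Nat.card_Icc,
      nsmul_eq_mul] at this
    push_cast [Nat.add_sub_cancel] at this
    rw [hDdef, hSdef]
    push_cast
    linarith [this]
  -- C'' is isolated: contradiction with maximality
  have hssub : C' ⊂ C'' := Finset.ssubset_insert hv'
  have hsubC : C'' ⊆ C := Finset.insert_subset hv hsub
  apply hmax C'' hssub hsubC
  unfold UsuallyAvgIsolated
  have hcardC'' : (C''.card : ℚ) = C'.card + 1 := by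
    rw [hC''def, Finset.card_insert_of_notMem hv']
    push_cast
    ring
  rw [hcardC'']
  have hD : D ≤ (t:ℚ) * ((δ:ℚ) + C'.card + 1) := hdeg
  nlinarith [hS', hSlt, hD, qineq, ht0]
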